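/- Let H be a submonoid of ℕ^k with H ≠ {0} and let r ∈ ℕ⁺. Then r = ind H if and only if there exists a subset B of β(H) such that: (1) |B| = r; (2) the submonoid ⟨B⟩ generated by B is free, i.e., isomorphic as an additive monoid to ℕ^r; and (3) for every h ∈ β(H) \ B there exist c ∈ ℕ⁺ and f, g ∈ ⟨B⟩ with f + c·h = g. -/

import Mathlib

def coordFn {k : ℕ} (A : Set (Fin k → ℕ)) (i : Fin k) : A → ℚ :=
  fun f => ((f : Fin k → ℕ) i : ℚ)

def IndepOver {k : ℕ} (X : Finset (Fin k)) (A : Set (Fin k → ℕ)) : Prop :=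
  LinearIndependent ℚ (fun i : X => coordFn A i.1)

def MaxIndepOver {k : ℕ} (X : Finset (Fin k)) (A : Set (Fin k → ℕ)) : Prop :=
  IndepOver X A ∧ ∀ Y : Finset (Fin k), X ⊂ Y → ¬ IndepOver Y A

open Pointwise in
def beta {k : ℕ} (H : AddSubmonoid (Fin k → ℕ)) : Set (Fin k → ℕ) :=
  ((H : Set (Fin k → ℕ)) \ {0}) \
    (((H : Set (Fin k → ℕ)) \ {0}) + ((H : Set (Fin k → ℕ)) \ {0}))

def restrictHom {k : ℕ} (X : Finset (Fin k)) : (Fin k → ℕ) →+ (Fin X.card → ℕ) where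
  toFun h := fun j => h (X.orderIsoOfFin rfl j).1
  map_zero' := rfl
  map_add' _ _ := rfl

def IsoToSub {k : ℕ} (H : AddSubmonoid (Fin k → ℕ)) (r : ℕ) : Prop :=
  ∃ K : AddSubmonoid (Fin r → ℕ), Nonempty (H ≃+ K)

noncomputable def indOf {k : ℕ} (H : AddSubmonoid (Fin k → ℕ)) : ℕ :=
  sInf {r : ℕ | 1 ≤ r ∧ IsoToSub H r}



open Finset Submodule

namespace St11
open Pointwise

variable {k : ℕ}

def QC (k : ℕ) : (Fin k → ℕ) →+ (Fin k → ℚ) where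
  toFun f := fun i => (f i : ℚ)
  map_zero' := by funext i; simp
  map_add' a b := by funext i; push_cast; simp

lemma QC_apply (f : Fin k → ℕ) (i : Fin k) : QC k f i = (f i : ℚ) := rfl

lemma QC_inj : Function.Injective (QC k) := by
  intro a b h
  funext i
  have h2 : (a i : ℚ) = (b i : ℚ) := congrFun h i
  exact_mod_cast h2

lemma qc_sum_smul {ι : Type*} [Fintype ι] (a : ι → ℕ) (w : ι → (Fin k → ℕ)) :
    QC k (∑ i, a i • w i) = ∑ i, (a i : ℚ) • QC k (w i) := by
  rw [map_sum]
  refine Finset.sum_congr rfl fun i _ => ?_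
  rw [map_nsmul, Nat.cast_smul_eq_nsmul]

lemma exists_int_scal {ι : Type*} [Fintype ι] (g : ι → ℚ) :
    ∃ N : ℕ, 0 < N ∧ ∃ z : ι → ℤ, ∀ i, (z i : ℚ) = N * g i := by
  classical
  refine ⟨∏ i, (g i).den, Finset.prod_pos fun i _ => (g i).pos, ?_⟩
  refine ⟨fun i => (g i).num * ((∏ j, (g j).den) / (g i).den : ℕ), fun i => ?_⟩
  have hdvd : (g i).den ∣ ∏ j, (g j).den := Finset.dvd_prod_of_mem _ (Finset.mem_univ i)
  have hden : ((g i).den : ℚ) ≠ 0 := by exact_mod_cast (g i).den_nz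
  have hcast : (((∏ j, (g j).den) / (g i).den : ℕ) : ℚ) = ((∏ j, (g j).den : ℕ) : ℚ) / ((g i).den : ℚ) :=
    Nat.cast_div hdvd hden
  calc (((g i).num * ((∏ j, (g j).den) / (g i).den : ℕ) : ℤ) : ℚ)
      = ((g i).num : ℚ) * (((∏ j, (g j).den) / (g i).den : ℕ) : ℚ) := by rw [Int.cast_mul, Int.cast_natCast]
    _ = ((g i).num : ℚ) * (((∏ j, (g j).den : ℕ) : ℚ) / ((g i).den : ℚ)) := by rw [hcast]
    _ = ((∏ j, (g j).den : ℕ) : ℚ) * (((g i).num : ℚ) / ((g i).den : ℚ)) := by ring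
    _ = _ := by rw [Rat.num_div_den]

lemma indep_iff_nat {ι : Type*} [Fintype ι] (w : ι → (Fin k → ℕ)) :
    LinearIndependent ℚ (fun i => QC k (w i)) ↔
      ∀ a b : ι → ℕ, (∑ i, a i • w i) = (∑ i, b i • w i) → a = b := by
  constructor
  · intro hli a b hab
    have h1 : ∑ i, ((a i : ℚ) - (b i : ℚ)) • QC k (w i) = 0 := by
      have := congrArg (QC k) hab
      rw [qc_sum_smul, qc_sum_smul] at this
      simp only [sub_smul]
      rw [Finset.sum_sub_distrib, this, sub_self]
    have h2 := Fintype.linearIndependent_iff.mp hli _ h1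
    funext i
    have := h2 i
    have : (a i : ℚ) = (b i : ℚ) := by linarith [this]
    exact_mod_cast this
  · intro hinj
    rw [Fintype.linearIndependent_iff]
    intro g hg i
    obtain ⟨N, hN, z, hz⟩ := exists_int_scal g
    have hz0 : ∑ i, (z i : ℚ) • QC k (w i) = 0 := by
      calc ∑ i, (z i : ℚ) • QC k (w i) = ∑ i, ((N : ℚ) * g i) • QC k (w i) := by
            refine Finset.sum_congr rfl fun i _ => by rw [hz]
        _ = (N : ℚ) • ∑ i, g i • QC k (w i) := by
            rw [Finset.smul_sum]; refine Finset.sum_congr rfl fun i _ => by rw [smul_smul]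
        _ = 0 := by rw [hg, smul_zero]
    set a : ι → ℕ := fun i => (z i).toNat with ha
    set b : ι → ℕ := fun i => (-(z i)).toNat with hb
    have hdiff : ∀ i, (a i : ℚ) - (b i : ℚ) = (z i : ℚ) := by
      intro i
      have := Int.toNat_sub_toNat_neg (z i)
      exact_mod_cast congrArg (fun t : ℤ => (t : ℚ)) this
    have hqab : QC k (∑ i, a i • w i) = QC k (∑ i, b i • w i) := by
      rw [qc_sum_smul, qc_sum_smul]
      have : ∑ i, (a i : ℚ) • QC k (w i) - ∑ i, (b i : ℚ) • QC k (w i) = 0 := by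
        rw [← Finset.sum_sub_distrib]
        calc ∑ i, ((a i : ℚ) • QC k (w i) - (b i : ℚ) • QC k (w i))
            = ∑ i, (z i : ℚ) • QC k (w i) := by
              refine Finset.sum_congr rfl fun i _ => by rw [← sub_smul, hdiff]
          _ = 0 := hz0
      exact sub_eq_zero.mp this
    have hab := hinj a b (QC_inj hqab)
    have hzi : z i = 0 := by
      have h1 : a i = b i := congrFun hab i
      have h2 : (z i : ℚ) = (a i : ℚ) - (b i : ℚ) := (hdiff i).symm
      rw [h1, sub_self] at h2
      exact_mod_cast h2
    have h3 : (N : ℚ) * g i = 0 := by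
      have := hz i
      rw [hzi] at this
      exact_mod_cast this.symm
    have hN' : (N : ℚ) ≠ 0 := by exact_mod_cast hN.ne'
    exact (mul_eq_zero.mp h3).resolve_left hN'

lemma wt_pos {f : Fin k → ℕ} (hf : f ≠ 0) : 0 < ∑ i, f i := by
  rcases Function.ne_iff.mp hf with ⟨i, hi⟩
  exact Finset.sum_pos' (fun j _ => Nat.zero_le _) ⟨i, Finset.mem_univ i, Nat.pos_of_ne_zero hi⟩

lemma closure_beta (H : AddSubmonoid (Fin k → ℕ)) :
    AddSubmonoid.closure (beta H) = H := by
  apply le_antisymm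
  · rw [AddSubmonoid.closure_le]
    intro x hx
    exact hx.1.1
  · intro h hh
    generalize hn : ∑ i, h i = n
    induction n using Nat.strong_induction_on generalizing h with
    | _ n ih =>
      by_cases h0 : h = 0
      · subst h0; exact zero_mem _
      by_cases hβ : h ∈ beta H
      · exact AddSubmonoid.subset_closure hβ
      · have hmem : h ∈ ((H : Set (Fin k → ℕ)) \ {0}) := ⟨hh, h0⟩
        have hsum : h ∈ ((H : Set (Fin k → ℕ)) \ {0}) + ((H : Set (Fin k → ℕ)) \ {0}) := by
          by_contra hc
          exact hβ ⟨hmem, hc⟩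
        rcases Set.mem_add.mp hsum with ⟨a, ha, b, hb, hab⟩
        have hwa : ∑ i, a i < n := by
          subst hn
          rw [← hab]
          have : ∑ i, (a + b) i = ∑ i, a i + ∑ i, b i := by
            simp [Finset.sum_add_distrib]
          rw [this]
          have := wt_pos (f := b) hb.2
          omega
        have hwb : ∑ i, b i < n := by
          subst hn
          rw [← hab]
          have : ∑ i, (a + b) i = ∑ i, a i + ∑ i, b i := by
            simp [Finset.sum_add_distrib]
          rw [this]
          have := wt_pos (f := a) ha.2
          omega
        rw [← hab]
        exact add_mem (ih _ hwa ha.1 rfl) (ih _ hwb hb.1 rfl)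

lemma mem_span_of_mem_closure {S : Set (Fin k → ℕ)} {x : Fin k → ℕ}
    (hx : x ∈ AddSubmonoid.closure S) : QC k x ∈ span ℚ (⇑(QC k) '' S) := by
  refine AddSubmonoid.closure_induction (fun y hy => subset_span ⟨y, hy, rfl⟩) ?_ ?_ hx
  · rw [map_zero]; exact zero_mem _
  · intro x y hx hy hx' hy'
    rw [map_add]; exact add_mem hx' hy'

lemma span_closure (S : Set (Fin k → ℕ)) :
    span ℚ (⇑(QC k) '' (AddSubmonoid.closure S : Set (Fin k → ℕ))) = span ℚ (⇑(QC k) '' S) := by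
  apply le_antisymm
  · rw [span_le]
    rintro q ⟨x, hx, rfl⟩
    exact mem_span_of_mem_closure hx
  · exact span_mono (Set.image_mono AddSubmonoid.subset_closure)

lemma span_beta (H : AddSubmonoid (Fin k → ℕ)) :
    span ℚ (⇑(QC k) '' beta H) = span ℚ (⇑(QC k) '' (H : Set (Fin k → ℕ))) := by
  conv_rhs => rw [← closure_beta H]
  exact (span_closure (beta H)).symm

lemma closure_equiv_free (B : Finset (Fin k → ℕ))
    (hind : LinearIndependent ℚ (fun x : (B : Set (Fin k → ℕ)) => QC k x.1)) :
    Nonempty (AddSubmonoid.closure (B : Set (Fin k → ℕ)) ≃+ (Fin B.card → ℕ)) := by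
  classical
  let e : {x // x ∈ B} ≃ Fin B.card := B.equivFin
  let v : Fin B.card → (Fin k → ℕ) := fun j => (e.symm j).1
  have hvB : ∀ j, v j ∈ B := fun j => (e.symm j).2
  have hindv : LinearIndependent ℚ (fun j => QC k (v j)) := by
    have he : Function.Injective (fun j : Fin B.card => (⟨(e.symm j).1, (e.symm j).2⟩ : (B : Set (Fin k → ℕ)))) := by
      intro i j hij
      have : (e.symm i).1 = (e.symm j).1 := congrArg Subtype.val hij
      have := Subtype.ext this (p := fun x => x ∈ B)
      exact e.symm.injective this
    exact hind.comp _ he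
  let Ψ : (Fin B.card → ℕ) →+ (Fin k → ℕ) := {
    toFun := fun n => ∑ j, n j • v j
    map_zero' := by simp
    map_add' := fun n m => by
      simp only [Pi.add_apply, add_smul, add_nsmul]
      exact Finset.sum_add_distrib }
  have hΨapply : ∀ n, Ψ n = ∑ j, n j • v j := fun n => rfl
  have hrange : ∀ n, Ψ n ∈ AddSubmonoid.closure (B : Set (Fin k → ℕ)) := by
    intro n
    rw [hΨapply]
    exact sum_mem fun j _ => nsmul_mem (AddSubmonoid.subset_closure (hvB j)) _
  have hinjΨ : Function.Injective Ψ := by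
    intro n m hnm
    exact (indep_iff_nat v).mp hindv n m hnm
  have hsurj : ∀ x ∈ AddSubmonoid.closure (B : Set (Fin k → ℕ)), ∃ n, Ψ n = x := by
    intro x hx
    refine AddSubmonoid.closure_induction ?_ ⟨0, by simp [hΨapply]⟩ ?_ hx
    · intro y hy
      refine ⟨Pi.single (e ⟨y, hy⟩) 1, ?_⟩
      rw [hΨapply]
      rw [Finset.sum_eq_single (e ⟨y, hy⟩)]
      · simp [v, e]
      · intro j _ hj
        rw [Pi.single_apply, if_neg (Ne.symm ?_), zero_smul]
        exact fun hc => hj hc.symm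
      · intro hc
        exact absurd (Finset.mem_univ _) hc
    · rintro x y _ _ ⟨n, rfl⟩ ⟨m, rfl⟩
      exact ⟨n + m, map_add Ψ n m⟩
  let Φ : (Fin B.card → ℕ) →+ AddSubmonoid.closure (B : Set (Fin k → ℕ)) :=
    Ψ.codRestrict _ hrange
  have hbij : Function.Bijective Φ := by
    constructor
    · intro n m hnm
      apply hinjΨ
      exact congrArg Subtype.val hnm
    · rintro ⟨x, hx⟩
      obtain ⟨n, hn⟩ := hsurj x hx
      exact ⟨n, Subtype.ext hn⟩
  exact ⟨(AddEquiv.ofBijective Φ hbij).symm⟩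

lemma exists_B (H : AddSubmonoid (Fin k → ℕ)) :
    ∃ B : Finset (Fin k → ℕ), (B : Set (Fin k → ℕ)) ⊆ beta H ∧
      B.card = Module.finrank ℚ (span ℚ (⇑(QC k) '' (H : Set (Fin k → ℕ)))) ∧
      LinearIndependent ℚ (fun x : (B : Set (Fin k → ℕ)) => QC k x.1) ∧
      span ℚ (⇑(QC k) '' (B : Set (Fin k → ℕ))) = span ℚ (⇑(QC k) '' (H : Set (Fin k → ℕ))) := by
  classical
  obtain ⟨b, hbsub, hbspan, hbli⟩ := exists_linearIndependent ℚ (⇑(QC k) '' beta H)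
  have hbfin : b.Finite := hbli.setFinite
  have hbrange : b ⊆ Set.range (⇑(QC k)) :=
    hbsub.trans (Set.image_subset_range _ _)
  have himg : ⇑(QC k) '' ((⇑(QC k)) ⁻¹' b) = b := Set.image_preimage_eq_of_subset hbrange
  have hB0fin : ((⇑(QC k)) ⁻¹' b).Finite := hbfin.preimage QC_inj.injOn
  refine ⟨hB0fin.toFinset, ?_, ?_, ?_, ?_⟩
  · intro x hx
    rw [hB0fin.coe_toFinset] at hx
    obtain ⟨y, hy, hyx⟩ := hbsub hx
    rwa [← QC_inj hyx]
  · haveI := hbfin.fintype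
    have h1 : (hB0fin.toFinset : Set (Fin k → ℕ)).ncard = ((⇑(QC k)) ⁻¹' b).ncard := by
      rw [hB0fin.coe_toFinset]
    have h2 : (⇑(QC k) '' ((⇑(QC k)) ⁻¹' b)).ncard = ((⇑(QC k)) ⁻¹' b).ncard :=
      Set.ncard_image_of_injective _ QC_inj
    have h3 : Module.finrank ℚ (span ℚ b) = b.toFinset.card := finrank_span_set_eq_card hbli
    have h4 : b.toFinset.card = b.ncard := (Set.ncard_eq_toFinset_card' b).symm
    have h5 : span ℚ b = span ℚ (⇑(QC k) '' (H : Set (Fin k → ℕ))) := by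
      rw [hbspan, span_beta]
    rw [← Set.ncard_coe_finset, h1, ← h2, himg, ← h4, ← h3, h5]
  · have hmem : ∀ x : (hB0fin.toFinset : Set (Fin k → ℕ)), QC k x.1 ∈ b := by
      rintro ⟨x, hx⟩
      rw [hB0fin.coe_toFinset] at hx
      exact hx
    have hinj : Function.Injective (fun x : (hB0fin.toFinset : Set (Fin k → ℕ)) =>
        (⟨QC k x.1, hmem x⟩ : b)) := by
      rintro ⟨x, hx⟩ ⟨y, hy⟩ hxy
      have : QC k x = QC k y := congrArg Subtype.val hxy
      exact Subtype.ext (QC_inj this)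
    exact hbli.comp _ hinj
  · rw [hB0fin.coe_toFinset, himg, hbspan, span_beta]

lemma coe_sum_smul {M : Type*} [AddCommMonoid M] (S : AddSubmonoid M) {n : ℕ}
    (c : Fin n → ℕ) (t : Fin n → S) :
    ((∑ j, c j • t j : S) : M) = ∑ j, c j • (t j : M) := by
  push_cast
  rfl

lemma hom_sum_smul {M N : Type*} [AddCommMonoid M] [AddCommMonoid N] (e : M →+ N) {n : ℕ}
    (c : Fin n → ℕ) (t : Fin n → M) :
    e (∑ j, c j • t j) = ∑ j, c j • e (t j) := by
  rw [map_sum]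
  exact Finset.sum_congr rfl fun j _ => map_nsmul e _ _

lemma beta_subset (H : AddSubmonoid (Fin k → ℕ)) : beta H ⊆ (H : Set (Fin k → ℕ)) :=
  fun x hx => hx.1.1

lemma rank_le_of_iso (H : AddSubmonoid (Fin k → ℕ)) {r : ℕ} (K : AddSubmonoid (Fin r → ℕ))
    (e : H ≃+ K) :
    Module.finrank ℚ (span ℚ (⇑(QC k) '' (H : Set (Fin k → ℕ)))) ≤ r := by
  classical
  obtain ⟨B, hBsub, hBcard, hBli, hBspan⟩ := exists_B H
  let ev := B.equivFin
  let v : Fin B.card → (Fin k → ℕ) := fun j => (ev.symm j).1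
  have hvH : ∀ j, v j ∈ H := fun j => beta_subset H (hBsub (ev.symm j).2)
  have hindv : LinearIndependent ℚ (fun j => QC k (v j)) := by
    have he : Function.Injective (fun j : Fin B.card =>
        (⟨(ev.symm j).1, (ev.symm j).2⟩ : (B : Set (Fin k → ℕ)))) := by
      intro i j hij
      exact ev.symm.injective (Subtype.ext (congrArg Subtype.val hij))
    exact hBli.comp _ he
  let vH : Fin B.card → H := fun j => ⟨v j, hvH j⟩
  let w : Fin B.card → (Fin r → ℕ) := fun j => ((e (vH j)) : Fin r → ℕ)
  have hindw : LinearIndependent ℚ (fun j => QC r (w j)) := by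
    rw [indep_iff_nat]
    intro a b hab
    have hsum : ∀ c : Fin B.card → ℕ,
        (((∑ j, c j • e (vH j)) : K) : Fin r → ℕ) = ∑ j, c j • w j :=
      fun c => coe_sum_smul K c _
    have hKeq : (∑ j, a j • e (vH j)) = ∑ j, b j • e (vH j) :=
      Subtype.coe_injective ((hsum a).trans (hab.trans (hsum b).symm))
    have heeq : e.toAddMonoidHom (∑ j, a j • vH j) = e.toAddMonoidHom (∑ j, b j • vH j) := by
      rw [hom_sum_smul e.toAddMonoidHom, hom_sum_smul e.toAddMonoidHom]
      exact hKeq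
    have hHeq : (∑ j, a j • vH j) = ∑ j, b j • vH j := e.injective heeq
    have hveq : (∑ j, a j • v j) = ∑ j, b j • v j := by
      have := congrArg (Subtype.val) hHeq
      rwa [coe_sum_smul H a vH, coe_sum_smul H b vH] at this
    exact (indep_iff_nat v).mp hindv a b hveq
  have hcard := hindw.fintype_card_le_finrank
  rw [Module.finrank_pi, Fintype.card_fin, Fintype.card_fin] at hcard
  rw [← hBcard]
  exact hcard

lemma iso_to_sub (hk : 0 < k) (H : AddSubmonoid (Fin k → ℕ)) :
    IsoToSub H (Module.finrank ℚ (span ℚ (⇑(QC k) '' (H : Set (Fin k → ℕ))))) := by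
  classical
  set V := span ℚ (⇑(QC k) '' (H : Set (Fin k → ℕ))) with hV
  set d := Module.finrank ℚ V with hd
  let φ : Fin k → Module.Dual ℚ V := fun i => V.subtype.dualMap ((Pi.basisFun ℚ (Fin k)).coord i)
  have hφ : ∀ (i : Fin k) (x : V), φ i x = (x : Fin k → ℚ) i := by
    intro i x
    simp [φ, LinearMap.dualMap_apply, Module.Basis.coord_apply, Pi.basisFun_repr]
  have hsurj : Function.Surjective (V.subtype.dualMap) :=
    LinearMap.dualMap_surjective_of_injective (Submodule.injective_subtype V)
  have hspan : span ℚ (Set.range φ) = ⊤ := by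
    have h1 : Set.range φ = ⇑(V.subtype.dualMap) '' Set.range ((Pi.basisFun ℚ (Fin k)).coord) := by
      rw [← Set.range_comp]
      rfl
    have h2 : span ℚ (Set.range ((Pi.basisFun ℚ (Fin k)).coord)) = ⊤ := by
      rw [← (Pi.basisFun ℚ (Fin k)).coe_dualBasis]
      exact (Pi.basisFun ℚ (Fin k)).dualBasis.span_eq
    rw [h1, Submodule.span_image, h2, Submodule.map_top, LinearMap.range_eq_top.mpr hsurj]
  obtain ⟨t, htsub, htspan, htli⟩ := exists_linearIndependent ℚ (Set.range φ)
  rw [hspan] at htspan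
  have htfin : t.Finite := htli.setFinite
  let c : Module.Dual ℚ V → Fin k := fun ψ =>
    if h : ψ ∈ Set.range φ then h.choose else ⟨0, hk⟩
  have hc : ∀ ψ ∈ t, φ (c ψ) = ψ := by
    intro ψ hψ
    have h : ψ ∈ Set.range φ := htsub hψ
    simp only [c, dif_pos h]
    exact h.choose_spec
  let X : Finset (Fin k) := htfin.toFinset.image c
  have hXcard : X.card = d := by
    have hinj : Set.InjOn c htfin.toFinset := by
      intro ψ hψ ψ' hψ' hcc
      simp only [Finset.mem_coe, Set.Finite.mem_toFinset] at hψ hψ'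
      rw [← hc ψ hψ, ← hc ψ' hψ', hcc]
    have h1 : X.card = htfin.toFinset.card := Finset.card_image_of_injOn hinj
    haveI := htfin.fintype
    have h2 : Module.finrank ℚ (span ℚ t) = t.toFinset.card := finrank_span_set_eq_card htli
    have h3 : t.toFinset.card = htfin.toFinset.card := by
      congr 1
      ext ψ
      rw [Set.mem_toFinset, Set.Finite.mem_toFinset]
    rw [h1, ← h3, ← h2, htspan, finrank_top, Subspace.dual_finrank_eq]
  have hchord : ∀ ψ ∈ t, ∃ i ∈ X, φ i = ψ := by
    intro ψ hψ
    exact ⟨c ψ, Finset.mem_image_of_mem c (htfin.mem_toFinset.mpr hψ), hc ψ hψ⟩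
  have hinjH : ∀ x y : Fin k → ℕ, x ∈ H → y ∈ H → (∀ i ∈ X, x i = y i) → x = y := by
    intro x y hx hy hxy
    have hxV : QC k x ∈ V := subset_span ⟨x, hx, rfl⟩
    have hyV : QC k y ∈ V := subset_span ⟨y, hy, rfl⟩
    set u : V := ⟨QC k x, hxV⟩ - ⟨QC k y, hyV⟩ with hu
    have hut : ∀ ψ ∈ t, ψ u = 0 := by
      intro ψ hψ
      obtain ⟨i, hiX, rfl⟩ := hchord ψ hψ
      rw [hφ i u]
      have : (u : Fin k → ℚ) i = (x i : ℚ) - (y i : ℚ) := rfl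
      rw [this, hxy i hiX, sub_self]
    have hall : ∀ ψ : Module.Dual ℚ V, ψ u = 0 := by
      intro ψ
      have hψ : ψ ∈ span ℚ t := by rw [htspan]; exact Submodule.mem_top
      refine Submodule.span_induction hut ?_ ?_ ?_ hψ
      · rfl
      · intro f g _ _ hf hg; rw [LinearMap.add_apply, hf, hg, add_zero]
      · intro q f _ hf; rw [LinearMap.smul_apply, hf, smul_zero]
    have huz : (u : Fin k → ℚ) = 0 := by
      funext i
      have := hall (φ i)
      rwa [hφ i u] at this
    have : QC k x = QC k y := by
      have h0 : (⟨QC k x, hxV⟩ : V) = ⟨QC k y, hyV⟩ := by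
        have hu0 : u = 0 := Subtype.ext huz
        rwa [hu, sub_eq_zero] at hu0
      exact congrArg Subtype.val h0
    exact QC_inj this
  -- build the isomorphism
  let ρ := restrictHom X
  have hρinj : ∀ x y : Fin k → ℕ, x ∈ H → y ∈ H → ρ x = ρ y → x = y := by
    intro x y hx hy hxy
    refine hinjH x y hx hy ?_
    intro i hi
    have hj : ((X.orderIsoOfFin rfl) ((X.orderIsoOfFin rfl).symm ⟨i, hi⟩)).1 = i := by
      rw [OrderIso.apply_symm_apply]
    have hxi : ρ x ((X.orderIsoOfFin rfl).symm ⟨i, hi⟩) = x i := congrArg x hj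
    have hyi : ρ y ((X.orderIsoOfFin rfl).symm ⟨i, hi⟩) = y i := congrArg y hj
    rw [← hxi, ← hyi]
    exact congrFun hxy _
  let K : AddSubmonoid (Fin X.card → ℕ) := AddSubmonoid.map ρ H
  let Φ : H →+ K := AddMonoidHom.codRestrict ((ρ).domRestrict H) K
    (fun x => ⟨x.1, x.2, rfl⟩)
  have hbij : Function.Bijective Φ := by
    constructor
    · intro a b hab
      have : ρ a.1 = ρ b.1 := congrArg Subtype.val hab
      exact Subtype.ext (hρinj a.1 b.1 a.2 b.2 this)
    · rintro ⟨y, x, hx, rfl⟩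
      exact ⟨⟨x, hx⟩, rfl⟩
  rw [← hXcard]
  exact ⟨K, ⟨AddEquiv.ofBijective Φ hbij⟩⟩

lemma V_finrank_pos (H : AddSubmonoid (Fin k → ℕ)) (hH : H ≠ ⊥) :
    0 < Module.finrank ℚ (span ℚ (⇑(QC k) '' (H : Set (Fin k → ℕ)))) := by
  have hex : ∃ x ∈ H, x ≠ (0 : Fin k → ℕ) := by
    by_contra hc
    push_neg at hc
    exact hH ((AddSubmonoid.eq_bot_iff_forall H).mpr hc)
  obtain ⟨x, hx, hx0⟩ := hex
  have hne : span ℚ (⇑(QC k) '' (H : Set (Fin k → ℕ))) ≠ ⊥ := by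
    intro hbot
    have : QC k x ∈ (⊥ : Submodule ℚ (Fin k → ℚ)) := hbot ▸ subset_span ⟨x, hx, rfl⟩
    rw [Submodule.mem_bot] at this
    exact hx0 (QC_inj (this.trans (map_zero (QC k)).symm))
  rw [Module.finrank_pos_iff]
  exact Submodule.nontrivial_iff_ne_bot.mpr hne

lemma indOf_eq (hk : 0 < k) (H : AddSubmonoid (Fin k → ℕ)) (hH : H ≠ ⊥) :
    indOf H = Module.finrank ℚ (span ℚ (⇑(QC k) '' (H : Set (Fin k → ℕ)))) := by
  have hmem : Module.finrank ℚ (span ℚ (⇑(QC k) '' (H : Set (Fin k → ℕ)))) ∈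
      {r : ℕ | 1 ≤ r ∧ IsoToSub H r} := ⟨V_finrank_pos H hH, iso_to_sub hk H⟩
  apply le_antisymm
  · exact Nat.sInf_le hmem
  · refine le_csInf ⟨_, hmem⟩ ?_
    rintro r' ⟨_, K, ⟨e⟩⟩
    exact rank_le_of_iso H K e

lemma sum_single {r : ℕ} (a : Fin r → ℕ) :
    (∑ i, a i • (Pi.single i 1 : Fin r → ℕ)) = a := by
  funext j
  rw [Finset.sum_apply]
  have : ∀ i, (a i • (Pi.single i 1 : Fin r → ℕ)) j = if j = i then a i else 0 := by
    intro i
    rw [Pi.smul_apply, Pi.single_apply]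
    split <;> simp
  rw [Finset.sum_congr rfl fun i _ => this i]
  simp

end St11

open St11 in
theorem statement11 {k : ℕ} (hk : 0 < k) (H : AddSubmonoid (Fin k → ℕ)) (hH : H ≠ ⊥)
    (r : ℕ) (hr : 1 ≤ r) :
    r = indOf H ↔
      ∃ B : Finset (Fin k → ℕ), (B : Set (Fin k → ℕ)) ⊆ beta H ∧
        B.card = r ∧
        Nonempty (AddSubmonoid.closure (B : Set (Fin k → ℕ)) ≃+ (Fin r → ℕ)) ∧
        ∀ h ∈ beta H \ (B : Set (Fin k → ℕ)), ∃ c : ℕ, 0 < c ∧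
          ∃ f ∈ AddSubmonoid.closure (B : Set (Fin k → ℕ)),
            ∃ g ∈ AddSubmonoid.closure (B : Set (Fin k → ℕ)), f + c • h = g := by
  classical
  have hind : indOf H = Module.finrank ℚ (Submodule.span ℚ (⇑(QC k) '' (H : Set (Fin k → ℕ)))) :=
    indOf_eq hk H hH
  set d := Module.finrank ℚ (Submodule.span ℚ (⇑(QC k) '' (H : Set (Fin k → ℕ)))) with hd
  constructor
  · intro hrind
    have hrd : r = d := hrind.trans hind
    obtain ⟨B, hBsub, hBcard, hBli, hBspan⟩ := exists_B H
    have hBcardr : B.card = r := hBcard.trans hrd.symm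
    refine ⟨B, hBsub, hBcardr, ?_, ?_⟩
    · have := closure_equiv_free B hBli
      rwa [hBcardr] at this
    · rintro h ⟨hhb, hhB⟩
      have hhV : QC k h ∈ Submodule.span ℚ (⇑(QC k) '' (B : Set (Fin k → ℕ))) := by
        rw [hBspan]
        exact Submodule.subset_span ⟨h, beta_subset H hhb, rfl⟩
      rw [Set.image_eq_range] at hhV
      rw [mem_span_range_iff_exists_fun] at hhV
      obtain ⟨q, hq⟩ := hhV
      obtain ⟨N, hN, z, hz⟩ := exists_int_scal q
      refine ⟨N, hN, ∑ x : (B : Set (Fin k → ℕ)), (-(z x)).toNat • x.1, ?_,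
        ∑ x : (B : Set (Fin k → ℕ)), (z x).toNat • x.1, ?_, ?_⟩
      · exact sum_mem fun x _ => nsmul_mem (AddSubmonoid.subset_closure x.2) _
      · exact sum_mem fun x _ => nsmul_mem (AddSubmonoid.subset_closure x.2) _
      · apply QC_inj
        rw [map_add, qc_sum_smul, qc_sum_smul, map_nsmul,
          ← Nat.cast_smul_eq_nsmul ℚ N (QC k h), ← hq, Finset.smul_sum,
          ← Finset.sum_add_distrib]
        refine Finset.sum_congr rfl fun x _ => ?_
        rw [smul_smul, ← hz x, ← add_smul]
        congr 1
        have h2 : ((z x).toNat : ℚ) - ((-(z x)).toNat : ℚ) = ((z x : ℤ) : ℚ) := by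
          exact_mod_cast congrArg (fun t : ℤ => (t : ℚ)) (Int.toNat_sub_toNat_neg (z x))
        linarith
  · rintro ⟨B, hBsub, hBcard, ⟨eiso⟩, hcond⟩
    have hdr : d ≤ r := by
      have hWle : Submodule.span ℚ (⇑(QC k) '' (H : Set (Fin k → ℕ)))
          ≤ Submodule.span ℚ (⇑(QC k) '' (B : Set (Fin k → ℕ))) := by
        rw [← span_beta H, Submodule.span_le]
        rintro _ ⟨h, hh, rfl⟩
        by_cases hB : h ∈ (B : Set (Fin k → ℕ))
        · exact Submodule.subset_span ⟨h, hB, rfl⟩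
        · obtain ⟨c, hc, f, hf, g, hg, heq⟩ := hcond h ⟨hh, hB⟩
          have hqeq : QC k f + (c : ℚ) • QC k h = QC k g := by
            have := congrArg (QC k) heq
            rwa [map_add, map_nsmul, ← Nat.cast_smul_eq_nsmul ℚ c (QC k h)] at this
          have hfW := mem_span_of_mem_closure (S := (B : Set (Fin k → ℕ))) hf
          have hgW := mem_span_of_mem_closure (S := (B : Set (Fin k → ℕ))) hg
          have hc0 : (c : ℚ) ≠ 0 := by exact_mod_cast hc.ne'
          have hrep : QC k h = (c : ℚ)⁻¹ • (QC k g - QC k f) := by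
            rw [← hqeq]
            rw [add_sub_cancel_left, inv_smul_smul₀ hc0]
          rw [hrep]
          exact Submodule.smul_mem _ _ (Submodule.sub_mem _ hgW hfW)
      have h1 : d ≤ Module.finrank ℚ (Submodule.span ℚ (⇑(QC k) '' (B : Set (Fin k → ℕ)))) :=
        Submodule.finrank_mono hWle
      have h2 : Module.finrank ℚ (Submodule.span ℚ (⇑(QC k) '' (B : Set (Fin k → ℕ)))) ≤ r := by
        have himg : (⇑(QC k) '' (B : Set (Fin k → ℕ))) = ↑(B.image (QC k)) := by
          rw [Finset.coe_image]
        rw [himg]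
        calc Module.finrank ℚ (Submodule.span ℚ (↑(B.image (QC k)) : Set (Fin k → ℚ)))
            ≤ (B.image (QC k)).card := finrank_span_finset_le_card _
          _ ≤ B.card := Finset.card_image_le
          _ = r := hBcard
      exact h1.trans h2
    have hrd : r ≤ d := by
      have hclH : AddSubmonoid.closure (B : Set (Fin k → ℕ)) ≤ H := by
        rw [AddSubmonoid.closure_le]
        exact hBsub.trans (beta_subset H)
      set w : Fin r → (Fin k → ℕ) := fun j => (eiso.symm (Pi.single j 1) : Fin k → ℕ) with hw
      have hwH : ∀ j, w j ∈ H := fun j => hclH (eiso.symm (Pi.single j 1)).2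
      have hindw : LinearIndependent ℚ (fun j => QC k (w j)) := by
        rw [indep_iff_nat]
        intro a b hab
        have hsum : ∀ cf : Fin r → ℕ,
            (((∑ j, cf j • eiso.symm (Pi.single j 1)) :
              AddSubmonoid.closure (B : Set (Fin k → ℕ))) : Fin k → ℕ)
              = ∑ j, cf j • w j := fun cf => coe_sum_smul _ cf _
        have hceq : (∑ j, a j • eiso.symm (Pi.single j 1))
            = ∑ j, b j • eiso.symm (Pi.single j 1) :=
          Subtype.coe_injective ((hsum a).trans (hab.trans (hsum b).symm))
        have heq2 : eiso.toAddMonoidHom (∑ j, a j • eiso.symm (Pi.single j 1))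
            = eiso.toAddMonoidHom (∑ j, b j • eiso.symm (Pi.single j 1)) := congrArg _ hceq
        rw [hom_sum_smul, hom_sum_smul] at heq2
        have hrw : ∀ (cf : Fin r → ℕ),
            (∑ j, cf j • eiso.toAddMonoidHom (eiso.symm (Pi.single j 1)))
              = ∑ j, cf j • (Pi.single j 1 : Fin r → ℕ) := by
          intro cf
          refine Finset.sum_congr rfl fun j _ => ?_
          congr 1
          exact eiso.apply_symm_apply _
        rw [hrw a, hrw b, sum_single a, sum_single b] at heq2
        exact heq2
      have hwV : ∀ j, QC k (w j) ∈ Submodule.span ℚ (⇑(QC k) '' (H : Set (Fin k → ℕ))) :=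
        fun j => Submodule.subset_span ⟨w j, hwH j, rfl⟩
      have hindwV : LinearIndependent ℚ (fun j =>
          (⟨QC k (w j), hwV j⟩ : Submodule.span ℚ (⇑(QC k) '' (H : Set (Fin k → ℕ))))) := by
        apply LinearIndependent.of_comp
          (Submodule.span ℚ (⇑(QC k) '' (H : Set (Fin k → ℕ)))).subtype
        exact hindw
      have := hindwV.fintype_card_le_finrank
      rwa [Fintype.card_fin] at this
    rw [hind]
    omega
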